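/- With U as in the block decomposition U = [[U_J, α 𝟏_J 𝟏_Kᵗ], [b_K 𝟏_Jᵗ, U_K]] (b_K the last column of U_K, both blocks nonsingular, α μ̄_J ≠ 1), the potential vector of U satisfies: the J-component of U⁻¹𝟏 equals ((1−α μ̄_K)/(1−α μ̄_J))·μ_J and the K-component equals μ_K − (μ̄_J(1−α μ̄_K)/(1−α μ̄_J))·e_K, where μ_J = U_J⁻¹𝟏_J, μ_K = U_K⁻¹𝟏_K, μ̄_J = 𝟏ᵗμ_J, μ̄_K = 𝟏ᵗμ_K. -/

import Mathlib

open Matrix BigOperators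

theorem block_potential_vector (m k : ℕ)
    (UJ : Matrix (Fin m) (Fin m) ℝ) (UK : Matrix (Fin (k + 1)) (Fin (k + 1)) ℝ)
    (α : ℝ) (hJ : IsUnit UJ.det) (hK : IsUnit UK.det)
    (eK : Fin (k + 1) → ℝ) (heK : eK = Pi.single (Fin.last k) 1)
    (μJ : Fin m → ℝ) (hμJ : μJ = UJ⁻¹ *ᵥ (fun _ => 1))
    (μK : Fin (k + 1) → ℝ) (hμK : μK = UK⁻¹ *ᵥ (fun _ => 1))
    (μbarJ : ℝ) (hμbarJ : μbarJ = ∑ i, μJ i)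
    (μbarK : ℝ) (hμbarK : μbarK = ∑ i, μK i)
    (hα : α * μbarJ ≠ 1)
    (U : Matrix (Fin m ⊕ Fin (k + 1)) (Fin m ⊕ Fin (k + 1)) ℝ)
    (hU : U = fromBlocks UJ (α • vecMulVec (fun _ => 1) (fun _ => 1))
      (vecMulVec (UK *ᵥ eK) (fun _ => 1)) UK) :
    (∀ j : Fin m, (U⁻¹ *ᵥ (fun _ => 1)) (Sum.inl j)
        = ((1 - α * μbarK) / (1 - α * μbarJ)) * μJ j) ∧
      (∀ i : Fin (k + 1), (U⁻¹ *ᵥ (fun _ => 1)) (Sum.inr i)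
        = μK i - (μbarJ * (1 - α * μbarK) / (1 - α * μbarJ)) * eK i) := by
  have hden : (1 : ℝ) - α * μbarJ ≠ 0 := sub_ne_zero.mpr (fun h => hα h.symm)
  haveI : Invertible UJ := UJ.invertibleOfIsUnitDet hJ
  have hsumeK : ∑ i, eK i = 1 := by
    subst heK; simp [Finset.sum_pi_single]
  set c : ℝ := (1 - α * μbarK) / (1 - α * μbarJ) with hc
  -- the candidate solution
  set x : Fin m ⊕ Fin (k + 1) → ℝ :=
    Sum.elim (fun j => c * μJ j) (fun i => μK i - μbarJ * c * eK i) with hx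
  -- basic facts
  have hUJμJ : UJ *ᵥ μJ = fun _ => 1 := by
    rw [hμJ, mulVec_mulVec, mul_nonsing_inv _ hJ, one_mulVec]
  have hUKμK : UK *ᵥ μK = fun _ => 1 := by
    rw [hμK, mulVec_mulVec, mul_nonsing_inv _ hK, one_mulVec]
  -- invertibility of U
  have hCAB : @HMul.hMul (Matrix (Fin (k+1)) (Fin m) ℝ) (Matrix (Fin m) (Fin (k+1)) ℝ)
      (Matrix (Fin (k+1)) (Fin (k+1)) ℝ) Matrix.instHMulOfFintypeOfMulOfAddCommMonoid
      (@HMul.hMul (Matrix (Fin (k+1)) (Fin m) ℝ) (Matrix (Fin m) (Fin m) ℝ)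
        (Matrix (Fin (k+1)) (Fin m) ℝ) Matrix.instHMulOfFintypeOfMulOfAddCommMonoid
        (vecMulVec (UK *ᵥ eK) (fun _ => (1:ℝ))) ⅟UJ)
      (α • vecMulVec (fun _ => (1:ℝ)) (fun _ => (1:ℝ)) : Matrix (Fin m) (Fin (k+1)) ℝ) =
      (α * μbarJ) • vecMulVec (UK *ᵥ eK) (fun _ => 1) := by
    have hinv : (⅟UJ : Matrix (Fin m) (Fin m) ℝ) = UJ⁻¹ := invOf_eq_nonsing_inv UJ
    set u := UK *ᵥ eK with hu
    have hbar : μbarJ = ∑ p, ∑ l, UJ⁻¹ p l := by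
      rw [hμbarJ, hμJ]; simp [mulVec, dotProduct]
    ext i j
    simp only [Matrix.mul_apply, Matrix.smul_apply, vecMulVec_apply, smul_eq_mul, hinv]
    rw [hbar]
    simp only [Finset.sum_mul, Finset.mul_sum]
    exact Finset.sum_comm.trans (Finset.sum_congr rfl fun _ _ => Finset.sum_congr rfl fun _ _ => by ring)
  have hdet : IsUnit U.det := by
    rw [hU, det_fromBlocks₁₁, hCAB]
    have h1 : UK - (α * μbarJ) • vecMulVec (UK *ᵥ eK) (fun _ => 1)
        = UK * (1 - (α * μbarJ) • vecMulVec eK (fun _ => (1:ℝ))) := by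
      rw [Matrix.mul_sub, Matrix.mul_one, Matrix.mul_smul]
      congr 2
      ext i j
      simp [Matrix.mul_apply, vecMulVec_apply, mulVec, dotProduct]
    rw [h1, det_mul]
    have h2 : ((1 - (α * μbarJ) • vecMulVec eK (fun _ => (1:ℝ))) : Matrix (Fin (k+1)) (Fin (k+1)) ℝ)
        = 1 + replicateCol Unit ((-(α * μbarJ)) • eK) * replicateRow Unit (fun _ => (1:ℝ)) := by
      rw [← vecMulVec_eq, sub_eq_add_neg]
      congr 1
      ext i j
      simp [vecMulVec_apply]
    rw [h2, det_one_add_replicateCol_mul_replicateRow]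
    have h3 : (fun _ => (1:ℝ)) ⬝ᵥ ((-(α * μbarJ)) • eK) = -(α * μbarJ) := by
      simp only [dotProduct, Pi.smul_apply, smul_eq_mul, one_mul, ← Finset.mul_sum, hsumeK,
        mul_one]
    rw [h3]
    exact hJ.mul (hK.mul (isUnit_iff_ne_zero.mpr (fun h => hden (by linarith))))
  -- U *ᵥ x = 1
  have hUx : U *ᵥ x = fun _ => (1 : ℝ) := by
    rw [hU, hx]
    funext s
    rw [show (Sum.elim (fun j => c * μJ j) (fun i => μK i - μbarJ * c * eK i) : Fin m ⊕ Fin (k+1) → ℝ)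
      = Sum.elim (c • μJ) (μK - (μbarJ * c) • eK) by
        funext t; cases t <;> simp [mul_comm]]
    rw [fromBlocks_mulVec]
    cases s with
    | inl j =>
      simp only [Sum.elim_inl, Sum.elim_comp_inl, Sum.elim_comp_inr, Pi.add_apply]
      rw [mulVec_smul, hUJμJ]
      have hB : (α • vecMulVec (fun _ => (1:ℝ)) (fun _ => (1:ℝ)) : Matrix (Fin m) (Fin (k+1)) ℝ) *ᵥ (μK - (μbarJ * c) • eK)
          = fun _ => α * (μbarK - μbarJ * c) := by
        funext i
        simp only [mulVec, dotProduct, Matrix.smul_apply, vecMulVec_apply, smul_eq_mul, one_mul,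
          Pi.sub_apply, Pi.smul_apply]
        rw [hμbarK]
        rw [Finset.sum_congr rfl (fun i _ => by ring :
          ∀ i ∈ Finset.univ, α * 1 * (μK i - μbarJ * c * eK i) = α * μK i - (α * (μbarJ * c)) * eK i)]
        rw [Finset.sum_sub_distrib, ← Finset.mul_sum, ← Finset.mul_sum, hsumeK]
        ring
      rw [hB]
      simp only [Pi.smul_apply, smul_eq_mul, mul_one]
      rw [hc]
      field_simp
      ring
    | inr i =>
      simp only [Sum.elim_inr, Sum.elim_comp_inl, Sum.elim_comp_inr, Pi.add_apply]
      have hC : vecMulVec (UK *ᵥ eK) (fun _ => (1:ℝ)) *ᵥ (c • μJ)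
          = fun i => (UK *ᵥ eK) i * (c * μbarJ) := by
        funext i
        simp only [mulVec, dotProduct, vecMulVec_apply, Pi.smul_apply, smul_eq_mul, mul_one]
        rw [hμbarJ, Finset.mul_sum, Finset.mul_sum]
      rw [hC]
      rw [mulVec_sub, hUKμK, mulVec_smul]
      simp only [Pi.sub_apply, Pi.smul_apply, smul_eq_mul]
      ring
  have hxeq : U⁻¹ *ᵥ (fun _ => 1) = x := by
    rw [← hUx, mulVec_mulVec, nonsing_inv_mul _ hdet, one_mulVec]
  rw [hxeq, hx]
  constructor
  · intro j; simp [hc]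
  · intro i; simp only [Sum.elim_inr]; rw [hc]; ring
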